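/- Let S be a discrete set and X a Banach space, and identify c_0(S, X)*** with ℓ^∞(S, X**)* = c_0(S, X**)^⊥ ⊕_1 ℓ¹(S, X***). Let Λ = ∑_{i=1}^∞ α_i (e_{s_i} ⊗ x_i*) ∈ S(c_0(S, X)*) = S(ℓ¹(S, X*)) with α_i ∈ (0,1], ∑ α_i = 1, s_i ∈ S distinct, and each x_i* ∈ S(X*) a w*-w point of continuity of X*_1. Then Λ has a unique norm-preserving extension from c_0(S, X) to c_0(S, X)** = ℓ^∞(S, X**); consequently Λ is a w*-w point of continuity of c_0(S, X)*_1. -/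

import Mathlib

open NormedSpace Filter Topology

/-- The topological dual of a seminormed space `E`, as `NormedSpace.Dual` was defined in the
older Mathlib (no longer present): `E →L[𝕜] 𝕜`, with `E` carrying its norm topology. -/
abbrev NormedSpace.Dual (𝕜 : Type*) [NontriviallyNormedField 𝕜] (E : Type*)
    [SeminormedAddCommGroup E] [NormedSpace 𝕜 E] : Type _ := E →L[𝕜] 𝕜

/-- `x*` in the dual unit ball is a *w\*-w point of continuity*: every net (filter) in the
dual unit ball converging weak\* to `x*` converges weakly to `x*`. -/
def IsWStarWPC {E : Type*} [NormedAddCommGroup E] [NormedSpace ℝ E]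
    (x : Dual ℝ E) : Prop :=
  ∀ l : Filter (Dual ℝ E), l.NeBot → (∀ᶠ φ in l, ‖φ‖ ≤ 1) →
    (∀ v : E, Tendsto (fun φ : Dual ℝ E => φ v) l (𝓝 (x v))) →
    ∀ Λ : Dual ℝ (Dual ℝ E), Tendsto (fun φ : Dual ℝ E => Λ φ) l (𝓝 (Λ x))


section Aux
variable {S : Type*} [TopologicalSpace S] [DiscreteTopology S]
  {X : Type*} [NormedAddCommGroup X] [NormedSpace ℝ X]

omit [DiscreteTopology S] [NormedSpace ℝ X] in
lemma c0_norm_apply_le (f : ZeroAtInftyContinuousMap S X) (t : S) : ‖f t‖ ≤ ‖f‖ := by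
  rw [← ZeroAtInftyContinuousMap.norm_toBCF_eq_norm]
  exact BoundedContinuousFunction.norm_coe_le_norm f.toBCF t

omit [DiscreteTopology S] [NormedSpace ℝ X] in
lemma c0_norm_le {f : ZeroAtInftyContinuousMap S X} {C : ℝ} (hC : 0 ≤ C)
    (h : ∀ t, ‖f t‖ ≤ C) : ‖f‖ ≤ C := by
  rw [← ZeroAtInftyContinuousMap.norm_toBCF_eq_norm]
  exact (BoundedContinuousFunction.norm_le hC).2 h

open Classical in
noncomputable def single0 (s : S) (v : X) : ZeroAtInftyContinuousMap S X where
  toFun := fun t => if t = s then v else 0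
  continuous_toFun := continuous_of_discreteTopology
  zero_at_infty' := by
    refine Filter.Tendsto.congr' ?_ tendsto_const_nhds
    filter_upwards [(isCompact_singleton : IsCompact {s}).compl_mem_cocompact] with t ht
    simp only [Set.mem_compl_iff, Set.mem_singleton_iff] at ht
    simp [ht]

open Classical in
omit [NormedSpace ℝ X] in
@[simp] lemma single0_apply (s : S) (v : X) (t : S) :
    single0 s v t = if t = s then v else 0 := rfl

omit [NormedSpace ℝ X] in
lemma norm_single0_le (s : S) (v : X) : ‖single0 s v‖ ≤ ‖v‖ := by
  refine c0_norm_le (norm_nonneg v) fun t => ?_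
  classical
  rw [single0_apply]
  split <;> simp [norm_nonneg]

noncomputable def sglL (s : S) : X →L[ℝ] ZeroAtInftyContinuousMap S X :=
  LinearMap.mkContinuous
    { toFun := single0 s
      map_add' := by
        intro a b; ext t; classical
        simp only [single0_apply, ZeroAtInftyContinuousMap.coe_add, Pi.add_apply]
        split <;> simp
      map_smul' := by
        intro c a; ext t; classical
        simp only [single0_apply, RingHom.id_apply, ZeroAtInftyContinuousMap.coe_smul,
          Pi.smul_apply]
        split <;> simp }
    1 (fun v => by simpa using norm_single0_le s v)

open Classical in
@[simp] lemma sglL_apply (s : S) (v : X) (t : S) :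
    sglL s v t = if t = s then v else 0 := rfl

noncomputable def evC (t : S) : ZeroAtInftyContinuousMap S X →L[ℝ] X :=
  LinearMap.mkContinuous
    { toFun := fun f => f t
      map_add' := fun f g => rfl
      map_smul' := fun c f => rfl }
    1 (fun f => by simpa using c0_norm_apply_le f t)

@[simp] lemma evC_apply (t : S) (f : ZeroAtInftyContinuousMap S X) : evC t f = f t := rfl

variable {s : ℕ → S}

/-- value of the truncation `P N g` at `s j` for `j < N`. -/
lemma P_apply_mem (hs : Function.Injective s) (g : ZeroAtInftyContinuousMap S X) {N j : ℕ} (hj : j < N) :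
    (∑ i ∈ Finset.range N, sglL (s i) (g (s i))) (s j) = g (s j) := by
  classical
  have := map_sum (evC (s j)) (fun i => sglL (s i) (g (s i))) (Finset.range N)
  simp only [evC_apply] at this
  rw [this]
  rw [Finset.sum_eq_single_of_mem j (Finset.mem_range.2 hj)]
  · simp
  · intro i hi hij
    have : s j ≠ s i := fun h => hij (hs h).symm
    simp [sglL_apply, this]

lemma P_apply_not_mem (g : ZeroAtInftyContinuousMap S X) {N : ℕ} {t : S}
    (ht : ∀ i < N, t ≠ s i) :
    (∑ i ∈ Finset.range N, sglL (s i) (g (s i))) t = 0 := by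
  classical
  have := map_sum (evC t) (fun i => sglL (s i) (g (s i))) (Finset.range N)
  simp only [evC_apply] at this
  rw [this]
  refine Finset.sum_eq_zero fun i hi => ?_
  simp [sglL_apply, ht i (Finset.mem_range.1 hi)]

lemma Q_apply_mem (hs : Function.Injective s) (g : ZeroAtInftyContinuousMap S X) {N j : ℕ} (hj : j < N) :
    (g - ∑ i ∈ Finset.range N, sglL (s i) (g (s i))) (s j) = 0 := by
  have := map_sub (evC (s j)) g (∑ i ∈ Finset.range N, sglL (s i) (g (s i)))
  simp only [evC_apply] at this
  rw [this, P_apply_mem hs g hj, sub_self]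

lemma Q_norm_le (hs : Function.Injective s) (g : ZeroAtInftyContinuousMap S X) (N : ℕ) :
    ‖g - ∑ i ∈ Finset.range N, sglL (s i) (g (s i))‖ ≤ ‖g‖ := by
  classical
  refine c0_norm_le (norm_nonneg g) fun t => ?_
  have hsub := map_sub (evC t) g (∑ i ∈ Finset.range N, sglL (s i) (g (s i)))
  simp only [evC_apply] at hsub
  rw [hsub]
  by_cases ht : ∃ i < N, t = s i
  · obtain ⟨i, hi, rfl⟩ := ht
    rw [P_apply_mem hs g hi, sub_self, norm_zero]
    exact norm_nonneg g
  · push_neg at ht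
    rw [P_apply_not_mem g ht, sub_zero]
    exact c0_norm_apply_le g t

/-- The fundamental disjoint-support estimate. -/
lemma key_bound (hs : Function.Injective s) (F : Finset ℕ) (w : ℕ → X) (hw : ∀ i ∈ F, ‖w i‖ ≤ 1)
    {C : ℝ} (hC : 0 ≤ C) (b : ZeroAtInftyContinuousMap S X)
    (hbpt : ∀ t, ‖b t‖ ≤ C) (hb0 : ∀ i ∈ F, b (s i) = 0)
    {φ : Dual ℝ (ZeroAtInftyContinuousMap S X)} (hφ : ‖φ‖ ≤ 1) :
    φ b + ∑ i ∈ F, C * φ ((sglL (s i)) (w i)) ≤ C := by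
  classical
  set h := b + ∑ i ∈ F, C • sglL (s i) (w i) with hh
  have hnorm : ‖h‖ ≤ C := by
    refine c0_norm_le hC fun t => ?_
    have happ : h t = b t + ∑ i ∈ F, C • (sglL (s i) (w i) t) := by
      have h1 := map_add (evC t) b (∑ i ∈ F, C • sglL (s i) (w i))
      have h2 := map_sum (evC t) (fun i => C • sglL (s i) (w i)) F
      simp only [evC_apply] at h1 h2
      rw [hh, h1, h2]
      simp [ZeroAtInftyContinuousMap.smul_apply]
    by_cases ht : ∃ i ∈ F, t = s i
    · obtain ⟨i, hi, rfl⟩ := ht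
      have hsum : ∑ j ∈ F, C • (sglL (s j) (w j) (s i)) = C • w i := by
        rw [Finset.sum_eq_single_of_mem i hi]
        · simp
        · intro j hj hji
          have : s i ≠ s j := fun h => hji (hs h).symm
          simp [sglL_apply, this]
      rw [happ, hsum, hb0 i hi, zero_add, norm_smul]
      calc |C| * ‖w i‖ ≤ |C| * 1 := mul_le_mul_of_nonneg_left (hw i hi) (abs_nonneg C)
        _ = C := by rw [mul_one, abs_of_nonneg hC]
    · push_neg at ht
      have hsum : ∑ j ∈ F, C • (sglL (s j) (w j) t) = 0 := by
        refine Finset.sum_eq_zero fun j hj => by simp [sglL_apply, ht j hj]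
      rw [happ, hsum, add_zero]
      exact hbpt t
  have hval : φ h = φ b + ∑ i ∈ F, C * φ (sglL (s i) (w i)) := by
    rw [hh, map_add, map_sum]
    congr 1
    exact Finset.sum_congr rfl fun i _ => by rw [map_smul, smul_eq_mul]
  calc φ b + ∑ i ∈ F, C * φ (sglL (s i) (w i)) = φ h := hval.symm
    _ ≤ ‖φ h‖ := le_abs_self _
    _ ≤ ‖φ‖ * ‖h‖ := φ.le_opNorm h
    _ ≤ 1 * C := mul_le_mul hφ hnorm (norm_nonneg h) zero_le_one
    _ = C := one_mul C

end Aux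


section PC
variable {S : Type*} [TopologicalSpace S] [DiscreteTopology S]
  {X : Type*} [NormedAddCommGroup X] [NormedSpace ℝ X]

set_option maxHeartbeats 1000000 in
theorem pc_main
    (Λ : Dual ℝ (ZeroAtInftyContinuousMap S X))
    (α : ℕ → ℝ) (hα : ∀ i, α i ∈ Set.Ioc (0:ℝ) 1) (hαsum : HasSum α 1)
    (s : ℕ → S) (hs : Function.Injective s)
    (x : ℕ → Dual ℝ X) (hx : ∀ i, ‖x i‖ = 1) (hxpc : ∀ i, IsWStarWPC (x i))
    (hrep : ∀ f : ZeroAtInftyContinuousMap S X, Λ f = ∑' i, α i * (x i) (f (s i))) :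
    IsWStarWPC Λ := by
  classical
  intro l hne hb hconv Ψ
  -- coordinate functionals of Λ
  have hΛcoord : ∀ i, Λ.comp (sglL (s i)) = α i • x i := by
    intro i
    ext v
    simp only [ContinuousLinearMap.coe_comp', Function.comp_apply,
      ContinuousLinearMap.smul_apply, smul_eq_mul]
    rw [hrep, tsum_eq_single i]
    · simp
    · intro j hj
      have hne' : s j ≠ s i := fun h => hj (hs h)
      simp [sglL_apply, hne']
  have hΛsgl : ∀ i (v : X), Λ (sglL (s i) v) = α i * x i v := by
    intro i v
    have := congrArg (fun T : Dual ℝ X => T v) (hΛcoord i)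
    simpa using this
  -- tail bound for Λ
  have hΛQ : ∀ (N : ℕ) (g : ZeroAtInftyContinuousMap S X),
      |Λ (g - ∑ i ∈ Finset.range N, sglL (s i) (g (s i)))| ≤
        (1 - ∑ i ∈ Finset.range N, α i) * ‖g‖ := by
    intro N g
    set Q := g - ∑ i ∈ Finset.range N, sglL (s i) (g (s i)) with hQdef
    have hQs : ∀ j, j < N → Q (s j) = 0 := fun j hj => Q_apply_mem hs g hj
    have hQn : ‖Q‖ ≤ ‖g‖ := Q_norm_le hs g N
    rw [hrep]
    set a : ℕ → ℝ := fun j => α j * x j (Q (s j)) with ha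
    have habound : ∀ j, ‖a j‖ ≤ α j * ‖g‖ := by
      intro j
      calc ‖a j‖ = |α j| * ‖x j (Q (s j))‖ := by
            rw [ha]; simp [abs_mul, Real.norm_eq_abs]
        _ = α j * ‖x j (Q (s j))‖ := by rw [abs_of_pos (hα j).1]
        _ ≤ α j * (‖x j‖ * ‖Q (s j)‖) :=
            mul_le_mul_of_nonneg_left ((x j).le_opNorm _) (hα j).1.le
        _ = α j * ‖Q (s j)‖ := by rw [hx j, one_mul]
        _ ≤ α j * ‖g‖ := by
            have := (c0_norm_apply_le Q (s j)).trans hQn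
            exact mul_le_mul_of_nonneg_left this (hα j).1.le
    have hasum : Summable a :=
      Summable.of_norm_bounded (hαsum.summable.mul_right _) habound
    set b : ℕ → ℝ := fun j => if j < N then 0 else α j * ‖g‖ with hbdef
    have hbbound : ∀ j, ‖b j‖ ≤ α j * ‖g‖ := by
      intro j
      by_cases hj : j < N
      · simp [hbdef, hj, mul_nonneg (hα j).1.le (norm_nonneg g)]
      · simp only [hbdef, hj, if_false, Real.norm_eq_abs, abs_mul, abs_norm,
          abs_of_pos (hα j).1]
        exact le_rfl
    have hbsum : Summable b :=
      Summable.of_norm_bounded (hαsum.summable.mul_right _) hbbound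
    have hanorm : Summable fun j => ‖a j‖ := by
      simpa [Real.norm_eq_abs] using hasum.abs
    have h1 : |∑' j, a j| ≤ ∑' j, b j := by
      calc |∑' j, a j| = ‖∑' j, a j‖ := (Real.norm_eq_abs _).symm
        _ ≤ ∑' j, ‖a j‖ := norm_tsum_le_tsum_norm hanorm
        _ ≤ ∑' j, b j := by
            refine Summable.tsum_le_tsum ?_ hanorm hbsum
            intro j
            by_cases hj : j < N
            · simp [ha, hbdef, hj, hQs j hj]
            · simpa [hbdef, hj] using habound j
    have htail : ∑' j, α (j + N) = 1 - ∑ i ∈ Finset.range N, α i := by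
      have := Summable.sum_add_tsum_nat_add (f := α) N hαsum.summable
      rw [hαsum.tsum_eq] at this
      linarith
    have h2 : ∑' j, b j = (1 - ∑ i ∈ Finset.range N, α i) * ‖g‖ := by
      have h3 := (Summable.sum_add_tsum_nat_add (f := b) N hbsum).symm
      have h4 : ∑ i ∈ Finset.range N, b i = 0 :=
        Finset.sum_eq_zero fun i hi => by simp [hbdef, Finset.mem_range.1 hi]
      have h5 : ∀ j, b (j + N) = α (j + N) * ‖g‖ := fun j => by
        simp [hbdef, Nat.not_lt.2 (Nat.le_add_left N j)]
      calc ∑' j, b j = ∑ i ∈ Finset.range N, b i + ∑' j, b (j + N) := h3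
        _ = ∑' j, α (j + N) * ‖g‖ := by rw [h4, zero_add]; exact tsum_congr h5
        _ = (∑' j, α (j + N)) * ‖g‖ := tsum_mul_right
        _ = (1 - ∑ i ∈ Finset.range N, α i) * ‖g‖ := by rw [htail]
    exact h1.trans h2.le
  -- the core eventual estimates
  have core : ∀ ε : ℝ, 0 < ε → ∀ N : ℕ, 1 - ε < ∑ i ∈ Finset.range N, α i →
      ∀ᶠ φ in l,
        (∀ g : ZeroAtInftyContinuousMap S X,
          |φ (g - ∑ i ∈ Finset.range N, sglL (s i) (g (s i)))| ≤ 2*ε*‖g‖) ∧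
        (∀ i < N, ‖φ.comp (sglL (s i))‖ ≤ α i + 2*ε) ∧
        (∀ i < N, α i - ε ≤ ‖φ.comp (sglL (s i))‖) := by
    intro ε hε N hN
    set δ : ℝ := ε / (2*N + 2) with hδdef
    have h2N : (0:ℝ) < 2*N + 2 := by positivity
    have hδpos : 0 < δ := by rw [hδdef]; positivity
    have hδN : 2 * N * δ ≤ ε := by
      have h1 : (2*(N:ℝ)) * (ε/(2*N+2)) ≤ (2*N+2) * (ε/(2*N+2)) :=
        mul_le_mul_of_nonneg_right (by linarith) (by positivity)
      have h2 : (2*(N:ℝ)+2) * (ε/(2*N+2)) = ε := by field_simp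
      rw [hδdef]; linarith
    have hδε : 2*δ ≤ ε := by
      have h1 : ε/(2*(N:ℝ)+2) ≤ ε/2 := by
        apply div_le_div_of_nonneg_left hε.le (by norm_num) (by linarith)
      rw [hδdef]; linarith
    -- norming vectors
    have hv : ∀ i, ∃ v : X, ‖v‖ ≤ 1 ∧ 1 - δ < x i v := by
      intro i
      have h1 : 1 - δ < ‖x i‖ := by rw [hx i]; linarith
      obtain ⟨u, hu1, hu2⟩ := (x i).exists_lt_apply_of_lt_opNorm h1
      rcases le_or_gt 0 (x i u) with hpos | hneg
      · exact ⟨u, hu1.le, by rwa [Real.norm_eq_abs, abs_of_nonneg hpos] at hu2⟩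
      · refine ⟨-u, by simpa using hu1.le, ?_⟩
        rw [map_neg]
        rwa [Real.norm_eq_abs, abs_of_neg hneg] at hu2
    choose v hv1 hv2 using hv
    -- the eventual event
    have hev : ∀ᶠ φ in l, ‖φ‖ ≤ 1 ∧
        ∀ i ∈ Finset.range N, α i - 2*δ < φ (sglL (s i) (v i)) := by
      refine hb.and ?_
      rw [Finset.eventually_all]
      intro i _
      have hlim := hconv (sglL (s i) (v i))
      rw [hΛsgl i (v i)] at hlim
      have hlt : α i - 2*δ < α i * x i (v i) := by
        have h1 : α i * (1 - δ) < α i * x i (v i) :=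
          mul_lt_mul_of_pos_left (hv2 i) (hα i).1
        nlinarith [(hα i).2, (hα i).1, hδpos]
      exact hlim.eventually (eventually_gt_nhds hlt)
    filter_upwards [hev] with φ hφ
    obtain ⟨hφ1, hφ2⟩ := hφ
    -- Claim A (one-sided)
    have hA : ∀ g : ZeroAtInftyContinuousMap S X,
        φ (g - ∑ i ∈ Finset.range N, sglL (s i) (g (s i))) ≤ 2*ε*‖g‖ := by
      intro g
      have hkb := key_bound hs (Finset.range N) v (fun i _ => hv1 i) (norm_nonneg g)
          (g - ∑ i ∈ Finset.range N, sglL (s i) (g (s i)))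
          (fun t => (c0_norm_apply_le _ t).trans (Q_norm_le hs g N))
          (fun i hi => Q_apply_mem hs g (Finset.mem_range.1 hi)) hφ1
      have hlow : ∑ i ∈ Finset.range N, ‖g‖ * (α i - 2*δ) ≤
          ∑ i ∈ Finset.range N, ‖g‖ * φ (sglL (s i) (v i)) :=
        Finset.sum_le_sum fun i hi =>
          mul_le_mul_of_nonneg_left (hφ2 i hi).le (norm_nonneg g)
      have hsum : ∑ i ∈ Finset.range N, ‖g‖ * (α i - 2*δ) =
          ‖g‖ * ((∑ i ∈ Finset.range N, α i) - N*(2*δ)) := by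
        rw [← Finset.mul_sum, Finset.sum_sub_distrib, Finset.sum_const,
          Finset.card_range, nsmul_eq_mul]
      have h3 : 1 - (∑ i ∈ Finset.range N, α i) + 2*N*δ ≤ 2*ε := by linarith
      have h4 : φ (g - ∑ i ∈ Finset.range N, sglL (s i) (g (s i))) ≤
          ‖g‖ * (1 - (∑ i ∈ Finset.range N, α i) + 2*N*δ) := by nlinarith
      calc φ (g - ∑ i ∈ Finset.range N, sglL (s i) (g (s i)))
          ≤ ‖g‖ * (1 - (∑ i ∈ Finset.range N, α i) + 2*N*δ) := h4
        _ ≤ ‖g‖ * (2*ε) := mul_le_mul_of_nonneg_left h3 (norm_nonneg g)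
        _ = 2*ε*‖g‖ := by ring
    have hAabs : ∀ g : ZeroAtInftyContinuousMap S X,
        |φ (g - ∑ i ∈ Finset.range N, sglL (s i) (g (s i)))| ≤ 2*ε*‖g‖ := by
      intro g
      have hneg : (-g - ∑ i ∈ Finset.range N, sglL (s i) ((-g) (s i))) =
          -(g - ∑ i ∈ Finset.range N, sglL (s i) (g (s i))) := by
        have h1 : ∀ i, sglL (s i) ((-g) (s i)) = -(sglL (s i) (g (s i))) := by
          intro i
          rw [show (-g) (s i) = -(g (s i)) from congrFun (ZeroAtInftyContinuousMap.coe_neg g) (s i),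
            map_neg]
        rw [Finset.sum_congr rfl fun i _ => h1 i, Finset.sum_neg_distrib]
        abel
      have h2 := hA (-g)
      rw [hneg, map_neg, norm_neg] at h2
      exact abs_le.2 ⟨by linarith, hA g⟩
    -- Claim B
    have hBcl : ∀ i < N, ‖φ.comp (sglL (s i))‖ ≤ α i + 2*ε := by
      intro i hi
      have hnn : (0:ℝ) ≤ α i + 2*ε := by nlinarith [(hα i).1]
      have hgen : ∀ u : X, φ (sglL (s i) u) ≤ (α i + 2*ε) * ‖u‖ := by
        intro u
        have hbpt : ∀ t, ‖(sglL (s i) u) t‖ ≤ ‖u‖ := by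
          intro t
          rw [sglL_apply]
          split <;> simp [norm_nonneg]
        have hb0 : ∀ j ∈ (Finset.range N).erase i, (sglL (s i) u) (s j) = 0 := by
          intro j hj
          have hji : j ≠ i := Finset.ne_of_mem_erase hj
          have : s j ≠ s i := fun h => hji (hs h)
          simp [sglL_apply, this]
        have hkb := key_bound hs ((Finset.range N).erase i) v
            (fun j _ => hv1 j) (norm_nonneg u) (sglL (s i) u) hbpt hb0 hφ1
        have hlow : ∑ j ∈ (Finset.range N).erase i, ‖u‖ * (α j - 2*δ) ≤
            ∑ j ∈ (Finset.range N).erase i, ‖u‖ * φ (sglL (s j) (v j)) :=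
          Finset.sum_le_sum fun j hj =>
            mul_le_mul_of_nonneg_left (hφ2 j (Finset.mem_of_mem_erase hj)).le (norm_nonneg u)
        have herase : ∑ j ∈ (Finset.range N).erase i, (α j - 2*δ) =
            (∑ j ∈ Finset.range N, (α j - 2*δ)) - (α i - 2*δ) := by
          rw [← Finset.sum_erase_add (Finset.range N) _ (Finset.mem_range.2 hi)]
          ring
        have hsum2 : ∑ j ∈ (Finset.range N).erase i, ‖u‖ * (α j - 2*δ) =
            ‖u‖ * ((∑ j ∈ Finset.range N, α j) - N*(2*δ) - α i + 2*δ) := by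
          rw [← Finset.mul_sum, herase, Finset.sum_sub_distrib, Finset.sum_const,
            Finset.card_range, nsmul_eq_mul]
          ring
        have h3 : 1 - ((∑ j ∈ Finset.range N, α j) - N*(2*δ) - α i + 2*δ) ≤ α i + 2*ε := by
          nlinarith [hδpos]
        have h4 : φ (sglL (s i) u) ≤
            ‖u‖ * (1 - ((∑ j ∈ Finset.range N, α j) - N*(2*δ) - α i + 2*δ)) := by nlinarith
        calc φ (sglL (s i) u)
            ≤ ‖u‖ * (1 - ((∑ j ∈ Finset.range N, α j) - N*(2*δ) - α i + 2*δ)) := h4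
          _ ≤ ‖u‖ * (α i + 2*ε) := mul_le_mul_of_nonneg_left h3 (norm_nonneg u)
          _ = (α i + 2*ε) * ‖u‖ := by ring
      refine ContinuousLinearMap.opNorm_le_bound _ hnn fun u => ?_
      have h5 := hgen (-u)
      rw [map_neg, map_neg, norm_neg] at h5
      have h6 : |φ (sglL (s i) u)| ≤ (α i + 2*ε) * ‖u‖ := abs_le.2 ⟨by linarith, hgen u⟩
      simpa [Real.norm_eq_abs] using h6
    -- Claim C
    have hCcl : ∀ i < N, α i - ε ≤ ‖φ.comp (sglL (s i))‖ := by
      intro i hi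
      have h1 : α i - 2*δ < φ (sglL (s i) (v i)) := hφ2 i (Finset.mem_range.2 hi)
      have h2 : φ (sglL (s i) (v i)) ≤ ‖φ.comp (sglL (s i))‖ := by
        have h3 : |φ (sglL (s i) (v i))| ≤ ‖φ.comp (sglL (s i))‖ * ‖v i‖ := by
          have := (φ.comp (sglL (s i))).le_opNorm (v i)
          simpa [Real.norm_eq_abs] using this
        have h4 : ‖φ.comp (sglL (s i))‖ * ‖v i‖ ≤ ‖φ.comp (sglL (s i))‖ * 1 :=
          mul_le_mul_of_nonneg_left (hv1 i) (norm_nonneg _)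
        calc φ (sglL (s i) (v i)) ≤ |φ (sglL (s i) (v i))| := le_abs_self _
          _ ≤ ‖φ.comp (sglL (s i))‖ * 1 := h3.trans h4
          _ = ‖φ.comp (sglL (s i))‖ := mul_one _
      linarith
    exact ⟨hAabs, hBcl, hCcl⟩
  -- convergence of coordinate norms
  have hnormtend : ∀ i, Tendsto (fun φ : Dual ℝ (ZeroAtInftyContinuousMap S X) =>
      ‖φ.comp (sglL (s i))‖) l (𝓝 (α i)) := by
    intro i
    rw [Metric.tendsto_nhds]
    intro ε' hε'
    have hε4 : 0 < ε'/4 := by linarith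
    obtain ⟨N₀, hN₀⟩ := ((hαsum.tendsto_sum_nat).eventually
      (eventually_gt_nhds (show 1 - ε'/4 < 1 by linarith))).exists
    set N := max N₀ (i+1) with hNdef
    have hN : 1 - ε'/4 < ∑ j ∈ Finset.range N, α j := by
      refine hN₀.trans_le ?_
      refine Finset.sum_le_sum_of_subset_of_nonneg ?_ fun j _ _ => (hα j).1.le
      exact Finset.range_subset_range.2 (le_max_left _ _)
    have hiN : i < N := lt_of_lt_of_le (Nat.lt_succ_self i) (le_max_right _ _)
    filter_upwards [core (ε'/4) hε4 N hN] with φ hco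
    obtain ⟨-, hB, hC⟩ := hco
    have h1 := hB i hiN
    have h2 := hC i hiN
    rw [Real.dist_eq, abs_sub_lt_iff]
    constructor <;> linarith
  -- the coordinate bidual functionals
  set Θ : ℕ → Dual ℝ (Dual ℝ X) := fun i =>
    Ψ.comp ((ContinuousLinearMap.compL ℝ (ZeroAtInftyContinuousMap S X) X ℝ).flip
      (evC (s i))) with hΘdef
  have hΘ : ∀ i (y : Dual ℝ X), Θ i y = Ψ (y.comp (evC (s i))) := by
    intro i y
    simp [hΘdef]
  -- weak convergence of coordinates against Θ i
  have hweak : ∀ i, Tendsto (fun φ : Dual ℝ (ZeroAtInftyContinuousMap S X) =>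
      Θ i (φ.comp (sglL (s i)))) l (𝓝 (α i * Θ i (x i))) := by
    intro i
    set c : Dual ℝ (ZeroAtInftyContinuousMap S X) → ℝ :=
      fun φ => max (α i) ‖φ.comp (sglL (s i))‖ with hcdef
    have hcpos : ∀ φ, 0 < c φ := fun φ => lt_of_lt_of_le (hα i).1 (le_max_left _ _)
    have hctend : Tendsto c l (𝓝 (α i)) := by
      have hmax := (tendsto_const_nhds :
        Tendsto (fun _ : Dual ℝ (ZeroAtInftyContinuousMap S X) => α i) l (𝓝 (α i))).max
        (hnormtend i)
      simpa [max_self] using hmax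
    set ψm : Dual ℝ (ZeroAtInftyContinuousMap S X) → Dual ℝ X :=
      fun φ => (c φ)⁻¹ • φ.comp (sglL (s i)) with hψmdef
    have h2 : ∀ᶠ y in l.map ψm, ‖y‖ ≤ 1 := by
      rw [eventually_map]
      refine Eventually.of_forall fun φ => ?_
      rw [hψmdef]
      simp only [norm_smul, Real.norm_eq_abs, abs_inv, abs_of_pos (hcpos φ)]
      calc (c φ)⁻¹ * ‖φ.comp (sglL (s i))‖ ≤ (c φ)⁻¹ * c φ :=
            mul_le_mul_of_nonneg_left (le_max_right _ _) (inv_nonneg.2 (hcpos φ).le)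
        _ = 1 := inv_mul_cancel₀ (ne_of_gt (hcpos φ))
    have h3 : ∀ w : X, Tendsto (fun y : Dual ℝ X => y w) (l.map ψm) (𝓝 (x i w)) := by
      intro w
      rw [tendsto_map'_iff]
      have heq : ((fun y : Dual ℝ X => y w) ∘ ψm) =
          fun φ => (c φ)⁻¹ * φ (sglL (s i) w) := by
        funext φ
        simp [hψmdef]
      rw [heq]
      have hlim := hconv (sglL (s i) w)
      rw [hΛsgl i w] at hlim
      have hmul := (hctend.inv₀ (ne_of_gt (hα i).1)).mul hlim
      have heq2 : (α i)⁻¹ * (α i * x i w) = x i w :=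
        inv_mul_cancel_left₀ (ne_of_gt (hα i).1) _
      rwa [heq2] at hmul
    have hpc := hxpc i (l.map ψm) (hne.map _) h2 h3 (Θ i)
    rw [tendsto_map'_iff] at hpc
    have hmul := hctend.mul hpc
    have heqfin : ∀ φ, c φ * ((fun y : Dual ℝ X => Θ i y) ∘ ψm) φ =
        Θ i (φ.comp (sglL (s i))) := by
      intro φ
      simp only [Function.comp_apply, hψmdef, map_smul, smul_eq_mul]
      rw [← mul_assoc, mul_inv_cancel₀ (ne_of_gt (hcpos φ)), one_mul]
    exact Tendsto.congr heqfin hmul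
  -- decomposition of Ψ along coordinates
  have hR : ∀ (φ : Dual ℝ (ZeroAtInftyContinuousMap S X)) (N : ℕ)
      (g : ZeroAtInftyContinuousMap S X),
      (φ - ∑ i ∈ Finset.range N, (φ.comp (sglL (s i))).comp (evC (s i))) g =
        φ (g - ∑ i ∈ Finset.range N, sglL (s i) (g (s i))) := by
    intro φ N g
    rw [map_sub φ, map_sum φ]
    simp [ContinuousLinearMap.sub_apply, ContinuousLinearMap.sum_apply]
  have hdecomp : ∀ (φ : Dual ℝ (ZeroAtInftyContinuousMap S X)) (N : ℕ),
      Ψ φ = Ψ (φ - ∑ i ∈ Finset.range N, (φ.comp (sglL (s i))).comp (evC (s i))) +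
        ∑ i ∈ Finset.range N, Θ i (φ.comp (sglL (s i))) := by
    intro φ N
    rw [map_sub, map_sum]
    have h1 : ∀ i ∈ Finset.range N, Ψ ((φ.comp (sglL (s i))).comp (evC (s i))) =
        Θ i (φ.comp (sglL (s i))) := fun i _ => (hΘ i _).symm
    rw [Finset.sum_congr rfl h1]
    ring
  -- final assembly
  rw [Metric.tendsto_nhds]
  intro ε' hε'
  set K := ‖Ψ‖ + 1 with hKdef
  have hK1 : 0 < K := by positivity
  set ε := ε' / (8*K) with hεdef
  have hεpos : 0 < ε := by rw [hεdef]; positivity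
  obtain ⟨N, hN⟩ : ∃ N, 1 - ε < ∑ i ∈ Finset.range N, α i :=
    ((hαsum.tendsto_sum_nat).eventually
      (eventually_gt_nhds (show 1 - ε < 1 by linarith))).exists
  have hΘΛ : ∀ i, Θ i (Λ.comp (sglL (s i))) = α i * Θ i (x i) := by
    intro i
    rw [hΛcoord i, map_smul, smul_eq_mul]
  have hRΛ : ‖(Λ - ∑ i ∈ Finset.range N, (Λ.comp (sglL (s i))).comp (evC (s i)))‖ ≤ ε := by
    refine ContinuousLinearMap.opNorm_le_bound _ hεpos.le fun g => ?_
    rw [hR]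
    rw [Real.norm_eq_abs]
    refine (hΛQ N g).trans ?_
    exact mul_le_mul_of_nonneg_right (by linarith) (norm_nonneg g)
  have hRφev : ∀ᶠ φ in l,
      ‖(φ - ∑ i ∈ Finset.range N, (φ.comp (sglL (s i))).comp (evC (s i)))‖ ≤ 2*ε := by
    filter_upwards [core ε hεpos N hN] with φ hco
    refine ContinuousLinearMap.opNorm_le_bound _ (by positivity) fun g => ?_
    rw [hR, Real.norm_eq_abs]
    exact hco.1 g
  have hterm : ∀ᶠ φ in l, ∀ i ∈ Finset.range N,
      |Θ i (φ.comp (sglL (s i))) - α i * Θ i (x i)| < ε' / (4*(N+1)) := by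
    rw [Finset.eventually_all]
    intro i _
    have hw := hweak i
    rw [Metric.tendsto_nhds] at hw
    refine (hw (ε' / (4*((N:ℝ)+1))) (by positivity)).mono fun φ h => ?_
    rwa [Real.dist_eq] at h
  filter_upwards [hRφev, hterm] with φ h1 h2
  rw [Real.dist_eq]
  have e1 := hdecomp φ N
  have e2 := hdecomp Λ N
  set Rφ := φ - ∑ i ∈ Finset.range N, (φ.comp (sglL (s i))).comp (evC (s i)) with hRφdef
  set RΛ := Λ - ∑ i ∈ Finset.range N, (Λ.comp (sglL (s i))).comp (evC (s i)) with hRΛdef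
  have e2' : Ψ Λ = Ψ RΛ + ∑ i ∈ Finset.range N, α i * Θ i (x i) := by
    rw [e2, Finset.sum_congr rfl fun i _ => hΘΛ i]
  have hsplit : Ψ φ - Ψ Λ = (Ψ Rφ - Ψ RΛ) +
      ∑ i ∈ Finset.range N, (Θ i (φ.comp (sglL (s i))) - α i * Θ i (x i)) := by
    rw [e1, e2', Finset.sum_sub_distrib]
    ring
  have hb1 : |Ψ Rφ| ≤ K * (2*ε) := by
    calc |Ψ Rφ| = ‖Ψ Rφ‖ := (Real.norm_eq_abs _).symm
      _ ≤ ‖Ψ‖ * ‖Rφ‖ := Ψ.le_opNorm Rφ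
      _ ≤ K * (2*ε) :=
          mul_le_mul (by rw [hKdef]; linarith) h1 (norm_nonneg _) hK1.le
  have hb2 : |Ψ RΛ| ≤ K * ε := by
    calc |Ψ RΛ| = ‖Ψ RΛ‖ := (Real.norm_eq_abs _).symm
      _ ≤ ‖Ψ‖ * ‖RΛ‖ := Ψ.le_opNorm RΛ
      _ ≤ K * ε :=
          mul_le_mul (by rw [hKdef]; linarith) hRΛ (norm_nonneg _) hK1.le
  have hb3 : |∑ i ∈ Finset.range N, (Θ i (φ.comp (sglL (s i))) - α i * Θ i (x i))| ≤
      N * (ε' / (4*(N+1))) := by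
    calc |∑ i ∈ Finset.range N, (Θ i (φ.comp (sglL (s i))) - α i * Θ i (x i))|
        ≤ ∑ i ∈ Finset.range N, |Θ i (φ.comp (sglL (s i))) - α i * Θ i (x i)| :=
          Finset.abs_sum_le_sum_abs _ _
      _ ≤ ∑ _i ∈ Finset.range N, (ε' / (4*(N+1))) :=
          Finset.sum_le_sum fun i hi => (h2 i hi).le
      _ = N * (ε' / (4*(N+1))) := by
          rw [Finset.sum_const, Finset.card_range, nsmul_eq_mul]
  have hKε : K * ε = ε'/8 := by
    rw [hεdef]
    field_simp
  have hb3' : (N:ℝ) * (ε' / (4*(N+1))) ≤ ε'/4 := by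
    have hN1 : (0:ℝ) < (N:ℝ)+1 := by positivity
    have h5 : (N:ℝ) * (ε' / (4*((N:ℝ)+1))) ≤ ((N:ℝ)+1) * (ε' / (4*((N:ℝ)+1))) :=
      mul_le_mul_of_nonneg_right (by linarith) (by positivity)
    have h6 : ((N:ℝ)+1) * (ε' / (4*((N:ℝ)+1))) = ε'/4 := by field_simp
    push_cast
    linarith
  have htri : |Ψ φ - Ψ Λ| ≤ |Ψ Rφ - Ψ RΛ| +
      |∑ i ∈ Finset.range N, (Θ i (φ.comp (sglL (s i))) - α i * Θ i (x i))| := by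
    rw [hsplit]; exact abs_add_le _ _
  have htri2 : |Ψ Rφ - Ψ RΛ| ≤ |Ψ Rφ| + |Ψ RΛ| := abs_sub _ _
  calc |Ψ φ - Ψ Λ| ≤ |Ψ Rφ| + |Ψ RΛ| +
        |∑ i ∈ Finset.range N, (Θ i (φ.comp (sglL (s i))) - α i * Θ i (x i))| := by
        linarith
    _ < ε' := by nlinarith

end PC


section Goldstine
variable {Y : Type*} [NormedAddCommGroup Y] [NormedSpace ℝ Y]

lemma goldstine (z : Dual ℝ (Dual ℝ Y)) (hz : ‖z‖ ≤ 1)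
    (Φ : Finset (Dual ℝ Y)) {ε : ℝ} (hε : 0 < ε) :
    ∃ y : Y, ‖y‖ ≤ 1 ∧ ∀ ψ ∈ Φ, |ψ y - z ψ| < ε := by
  classical
  set T : Y →L[ℝ] (↥Φ → ℝ) :=
    ContinuousLinearMap.pi (fun ψ : ↥Φ => (ψ.1 : Dual ℝ Y)) with hT
  set c : ↥Φ → ℝ := fun ψ => z ψ.1 with hc
  have hmem : c ∈ closure (T '' Metric.closedBall 0 1) := by
    by_contra hc'
    have hconv : Convex ℝ (closure (T '' Metric.closedBall 0 1)) :=
      ((convex_closedBall (0:Y) 1).linear_image (T : Y →ₗ[ℝ] (↥Φ → ℝ))).closure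
    obtain ⟨f, u, hfs, hfc⟩ :=
      geometric_hahn_banach_closed_point hconv isClosed_closure hc'
    have h0K : (0 : ↥Φ → ℝ) ∈ closure (T '' Metric.closedBall 0 1) :=
      subset_closure ⟨0, Metric.mem_closedBall_self zero_le_one, map_zero T⟩
    have hu0 : 0 < u := by
      have := hfs _ h0K
      rwa [map_zero f] at this
    set g : Dual ℝ Y := ∑ ψ : ↥Φ, f (fun j => if ψ = j then (1:ℝ) else 0) • ψ.1 with hg
    have hfdec : ∀ w : ↥Φ → ℝ,
        f w = ∑ ψ : ↥Φ, w ψ * f (fun j => if ψ = j then (1:ℝ) else 0) := by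
      intro w
      conv_lhs => rw [pi_eq_sum_univ w]
      rw [map_sum]
      exact Finset.sum_congr rfl fun ψ _ => by rw [map_smul, smul_eq_mul]
    have hgy : ∀ y : Y, g y = f (T y) := by
      intro y
      rw [hfdec (T y), hg, ContinuousLinearMap.sum_apply]
      refine Finset.sum_congr rfl fun ψ _ => ?_
      rw [ContinuousLinearMap.smul_apply, smul_eq_mul]
      exact mul_comm _ _
    have hfc' : f c = z g := by
      rw [hfdec c, hg, map_sum]
      refine Finset.sum_congr rfl fun ψ _ => ?_
      rw [map_smul, smul_eq_mul, hc]
      exact mul_comm _ _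
    have hball : ∀ w : Y, ‖w‖ ≤ 1 → g w < u := by
      intro w hw
      rw [hgy]
      refine hfs _ (subset_closure ⟨w, ?_, rfl⟩)
      simpa [Metric.mem_closedBall, dist_zero_right] using hw
    have hgnorm : ‖g‖ ≤ u := by
      refine ContinuousLinearMap.opNorm_le_bound _ hu0.le fun y => ?_
      rcases eq_or_ne y 0 with rfl | hy
      · simp [hu0.le]
      · have hyn : 0 < ‖y‖ := norm_pos_iff.2 hy
        have hunit : ‖(‖y‖⁻¹ • y : Y)‖ = 1 := by
          rw [norm_smul, Real.norm_eq_abs, abs_inv, abs_of_pos hyn,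
            inv_mul_cancel₀ hyn.ne']
        have h2 := hball _ hunit.le
        have h3 := hball (-(‖y‖⁻¹ • y)) (by rw [norm_neg, hunit])
        rw [map_neg] at h3
        have h4 : |g (‖y‖⁻¹ • y)| ≤ u := (abs_lt.2 ⟨by linarith, h2⟩).le
        have h5 : g (‖y‖⁻¹ • y) = ‖y‖⁻¹ * g y := by rw [map_smul, smul_eq_mul]
        rw [h5, abs_mul, abs_inv, abs_of_pos hyn] at h4
        rw [Real.norm_eq_abs]
        calc |g y| = ‖y‖ * (‖y‖⁻¹ * |g y|) := by
              rw [← mul_assoc, mul_inv_cancel₀ hyn.ne', one_mul]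
          _ ≤ ‖y‖ * u := mul_le_mul_of_nonneg_left h4 hyn.le
          _ = u * ‖y‖ := mul_comm _ _
    have hcon : u < u := by
      have h2 : z g ≤ ‖z‖ * ‖g‖ := by
        have := z.le_opNorm g
        have h3 : z g ≤ ‖z g‖ := le_abs_self _
        linarith [h3.trans this]
      have h3 : ‖z‖ * ‖g‖ ≤ 1 * u := mul_le_mul hz hgnorm (norm_nonneg g) zero_le_one
      calc u < f c := hfc
        _ = z g := hfc'
        _ ≤ 1 * u := h2.trans h3
        _ = u := one_mul u
    exact lt_irrefl u hcon
  rw [Metric.mem_closure_iff] at hmem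
  obtain ⟨b, ⟨y, hy, rfl⟩, hdist⟩ := hmem ε hε
  refine ⟨y, by simpa [Metric.mem_closedBall, dist_zero_right] using hy, fun ψ hψ => ?_⟩
  have h1 := dist_le_pi_dist c (T y) ⟨ψ, hψ⟩
  have h2 : dist (c ⟨ψ, hψ⟩) (T y ⟨ψ, hψ⟩) = |ψ y - z ψ| := by
    rw [Real.dist_eq, abs_sub_comm]
    rfl
  rw [h2] at h1
  exact lt_of_le_of_lt h1 hdist

end Goldstine


/-- A norm-one functional that is a w*-w point of continuity admits a unique
norm-preserving extension to the bidual (Goldstine + PC argument). -/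
lemma unique_ext_of_pc {E : Type*} [NormedAddCommGroup E] [NormedSpace ℝ E]
    (Λ : Dual ℝ E) (hΛ : ‖Λ‖ = 1) (hpc : IsWStarWPC Λ)
    (μ : Dual ℝ (Dual ℝ (Dual ℝ E)))
    (hext : ∀ f : E, μ (inclusionInDoubleDual ℝ E f) = Λ f)
    (hnorm : ‖μ‖ = ‖Λ‖) :
    μ = inclusionInDoubleDual ℝ (Dual ℝ E) Λ := by
  classical
  set Tm : Dual ℝ E → (Dual ℝ (Dual ℝ E) → ℝ) := fun φ Ψ => Ψ φ with hTm
  set l : Filter (Dual ℝ E) :=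
    comap Tm (𝓝 (fun Ψ => μ Ψ)) ⊓ 𝓟 {φ : Dual ℝ E | ‖φ‖ ≤ 1} with hl
  have hμ1 : ‖μ‖ ≤ 1 := by rw [hnorm, hΛ]
  have hne : l.NeBot := by
    rw [hl]
    refine inf_principal_neBot_iff.2 fun U hU => ?_
    obtain ⟨V, hV, hVU⟩ := Filter.mem_comap.1 hU
    rw [nhds_pi] at hV
    obtain ⟨I, hIfin, t, ht, hsub⟩ := mem_pi.1 hV
    choose εi hεipos hballi using fun i => Metric.mem_nhds_iff.1 (ht i)
    set Φ := hIfin.toFinset with hΦ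
    set ε0 := if h : Φ.Nonempty then Φ.inf' h εi else 1 with hε0
    have hε0pos : 0 < ε0 := by
      rw [hε0]
      split
      · next h => exact (Finset.lt_inf'_iff h).2 fun i _ => hεipos i
      · norm_num
    obtain ⟨y, hy1, hy2⟩ := goldstine μ hμ1 Φ hε0pos
    refine ⟨y, hVU (hsub ?_), hy1⟩
    rw [Set.mem_pi]
    intro i hi
    have hiΦ : i ∈ Φ := hIfin.mem_toFinset.2 hi
    apply hballi i
    have hval := hy2 i hiΦ
    have hle : ε0 ≤ εi i := by
      rw [hε0, dif_pos ⟨i, hiΦ⟩]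
      exact Finset.inf'_le _ hiΦ
    rw [Metric.mem_ball, Real.dist_eq]
    calc |Tm y i - μ i| = |i y - μ i| := rfl
      _ < ε0 := hval
      _ ≤ εi i := hle
  have hble : ∀ᶠ φ in l, ‖φ‖ ≤ 1 := by
    have h1 : {φ : Dual ℝ E | ‖φ‖ ≤ 1} ∈ l := by
      rw [hl]
      exact Filter.mem_inf_of_right (Filter.mem_principal_self _)
    exact h1
  have hTconv : ∀ Ψ : Dual ℝ (Dual ℝ E),
      Tendsto (fun φ : Dual ℝ E => Ψ φ) l (𝓝 (μ Ψ)) := by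
    intro Ψ
    have h1 : Tendsto Tm l (𝓝 (fun Ψ => μ Ψ)) := by
      rw [hl]
      exact tendsto_comap.mono_left inf_le_left
    exact ((continuous_apply Ψ).tendsto _).comp h1
  have hfconv : ∀ f : E, Tendsto (fun φ : Dual ℝ E => φ f) l (𝓝 (Λ f)) := by
    intro f
    have h1 := hTconv (inclusionInDoubleDual ℝ E f)
    rw [hext f] at h1
    exact h1.congr fun φ => NormedSpace.dual_def _ _ _ _
  have hweakconv := hpc l hne hble hfconv
  refine ContinuousLinearMap.ext fun Ψ => ?_
  have h3 : μ Ψ = Ψ Λ := tendsto_nhds_unique (hTconv Ψ) (hweakconv Ψ)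
  rw [h3, NormedSpace.dual_def]

/-- **Unique norm-preserving extensions of ℓ¹-sums of w\*-w PCs on `c₀(S, X)`.**  Let `S`
be a discrete set and `Λ = ∑ α_i (e_{s_i} ⊗ x_i*) ∈ S(c₀(S, X)*) = S(ℓ¹(S, X*))` with
`α_i ∈ (0, 1]`, `∑ α_i = 1`, `s_i ∈ S` distinct, and each `x_i* ∈ S(X*)` a w\*-w point of
continuity of `X*₁`.  Then `Λ` has a unique norm-preserving extension from `c₀(S, X)` to
its bidual `c₀(S, X)** = ℓ^∞(S, X**)`; consequently `Λ` is a w\*-w point of continuity of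
the dual unit ball of `c₀(S, X)`. -/
theorem unique_extension_of_l1_sum_of_wStarWPC
    {S : Type*} [TopologicalSpace S] [DiscreteTopology S]
    {X : Type*} [NormedAddCommGroup X] [NormedSpace ℝ X] [CompleteSpace X]
    (Λ : Dual ℝ (ZeroAtInftyContinuousMap S X)) (hΛ : ‖Λ‖ = 1)
    (α : ℕ → ℝ) (hα : ∀ i, α i ∈ Set.Ioc (0 : ℝ) 1) (hαsum : HasSum α 1)
    (s : ℕ → S) (hs : Function.Injective s)
    (x : ℕ → Dual ℝ X) (hx : ∀ i, ‖x i‖ = 1) (hxpc : ∀ i, IsWStarWPC (x i))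
    (hrep : ∀ f : ZeroAtInftyContinuousMap S X,
      Λ f = ∑' i, α i * (x i) (f (s i))) :
    (∃! Λ' : Dual ℝ (Dual ℝ (Dual ℝ (ZeroAtInftyContinuousMap S X))),
        (∀ f : ZeroAtInftyContinuousMap S X,
          Λ' (inclusionInDoubleDual ℝ (ZeroAtInftyContinuousMap S X) f) = Λ f) ∧
        ‖Λ'‖ = ‖Λ‖) ∧
      IsWStarWPC Λ := by
  have hpc : IsWStarWPC Λ := pc_main Λ α hα hαsum s hs x hx hxpc hrep
  refine ⟨⟨inclusionInDoubleDual ℝ (Dual ℝ (ZeroAtInftyContinuousMap S X)) Λ,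
    ⟨fun f => ?_, ?_⟩, ?_⟩, hpc⟩
  · rw [NormedSpace.dual_def, NormedSpace.dual_def]
  · exact (inclusionInDoubleDualLi ℝ
      (E := Dual ℝ (ZeroAtInftyContinuousMap S X))).norm_map Λ
  · rintro μ ⟨hext, hnorm⟩
    exact unique_ext_of_pc Λ hΛ hpc μ hext hnorm
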